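/- Expected smoothness of the stochastic gradient for minibatch sketches. Let f_1,…,f_n : ℝ^d → ℝ be differentiable, f := (1/n)∑_i f_i, f_C := (1/|C|)∑_{i∈C} f_i for nonempty C ⊆ [n], and let x* ∈ ℝ^d satisfy ∑_i ∇f_i(x*) = 0. Let G be a finite collection of nonempty subsets of [n] such that every i ∈ [n] lies in exactly c₁ ≥ 1 members of G, and let p_C > 0 for C ∈ G with ∑_{C∈G} p_C = 1. Assume: (a) for every i and every x: f_i(x) − f_i(x*) − ⟨∇f_i(x*), x − x*⟩ ≥ 0 (first-order convexity at x*); and (b) for every C ∈ G, there is L_C > 0 such that for all x: ‖∇f_C(x) − ∇f_C(x*)‖² ≤ 2L_C (f_C(x) − f_C(x*) − ⟨∇f_C(x*), x − x*⟩). Then for all x ∈ ℝ^d: ∑_{C∈G} p_C ‖(1/(n c₁ p_C)) ∑_{i∈C} (∇f_i(x) − ∇f_i(x*))‖² ≤ 2L₁ (f(x) − f(x*)), where L₁ := (1/(n c₁²)) · max_{i∈[n]} ∑_{C∈G : i∈C} |C| L_C / p_C. -/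

import Mathlib

/-- The (Euclidean) gradient of `f : ℝ^d → ℝ` at `x`. -/
noncomputable def grad {d : ℕ} (f : (Fin d → ℝ) → ℝ) (x : Fin d → ℝ) : Fin d → ℝ :=
  fun k => fderiv ℝ f x (Pi.single k 1)

/-- Squared Euclidean norm. -/
def sq2 {d : ℕ} (v : Fin d → ℝ) : ℝ := ∑ k, (v k) ^ 2

/-- Euclidean inner product. -/
def inner2 {d : ℕ} (v w : Fin d → ℝ) : ℝ := ∑ k, v k * w k

lemma sq2_smul {d : ℕ} (c : ℝ) (v : Fin d → ℝ) : sq2 (c • v) = c ^ 2 * sq2 v := by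
  simp [sq2, Finset.mul_sum, mul_pow]

lemma inner2_smul_left {d : ℕ} (c : ℝ) (v w : Fin d → ℝ) :
    inner2 (c • v) w = c * inner2 v w := by
  simp [inner2, Finset.mul_sum, mul_assoc]

lemma inner2_sum_left {d : ℕ} {ι : Type*} (s : Finset ι) (v : ι → Fin d → ℝ)
    (w : Fin d → ℝ) : inner2 (∑ i ∈ s, v i) w = ∑ i ∈ s, inner2 (v i) w := by
  unfold inner2
  simp only [Finset.sum_apply, Finset.sum_mul]
  exact Finset.sum_comm

/-- Expected smoothness of the stochastic gradient for minibatch sketches: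
`∑_{C∈G} p_C ‖(1/(n c₁ p_C)) ∑_{i∈C}(∇fᵢ(x) − ∇fᵢ(x*))‖² ≤ 2L₁(f(x) − f(x*))`, where
`L₁ = (1/(n c₁²)) maxᵢ ∑_{C∈G : i∈C} |C| L_C / p_C`. -/
theorem expected_smoothness_stochastic_gradient_minibatch
    {d n : ℕ} (hn : 0 < n)
    (f : Fin n → (Fin d → ℝ) → ℝ) (hdiff : ∀ i, Differentiable ℝ (f i))
    (fbar : (Fin d → ℝ) → ℝ) (hfbar : ∀ x, fbar x = (1 / (n : ℝ)) * ∑ i, f i x)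
    (fC : Finset (Fin n) → (Fin d → ℝ) → ℝ)
    (hfC : ∀ C x, fC C x = (1 / (C.card : ℝ)) * ∑ i ∈ C, f i x)
    (xs : Fin d → ℝ) (hcrit : ∑ i, grad (f i) xs = 0)
    (G : Finset (Finset (Fin n))) (hGne : ∀ C ∈ G, C.Nonempty)
    (c₁ : ℕ) (hc₁ : 1 ≤ c₁)
    (hcov : ∀ i : Fin n, (G.filter (fun C => i ∈ C)).card = c₁)
    (p : Finset (Fin n) → ℝ) (hp : ∀ C ∈ G, 0 < p C) (hp1 : ∑ C ∈ G, p C = 1)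
    (hconv : ∀ (i : Fin n) (x : Fin d → ℝ),
      0 ≤ f i x - f i xs - inner2 (grad (f i) xs) (x - xs))
    (L : Finset (Fin n) → ℝ) (hLpos : ∀ C ∈ G, 0 < L C)
    (hsmooth : ∀ C ∈ G, ∀ x : Fin d → ℝ,
      sq2 (grad (fC C) x - grad (fC C) xs)
        ≤ 2 * L C * (fC C x - fC C xs - inner2 (grad (fC C) xs) (x - xs)))
    (L₁ : ℝ)
    (hL₁ : L₁ = (1 / ((n : ℝ) * (c₁ : ℝ) ^ 2)) *
        (⨆ i : Fin n, ∑ C ∈ G.filter (fun C => i ∈ C), (C.card : ℝ) * L C / p C)) :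
    ∀ x : Fin d → ℝ,
      ∑ C ∈ G, p C *
          sq2 ((1 / ((n : ℝ) * (c₁ : ℝ) * p C)) •
            ∑ i ∈ C, (grad (f i) x - grad (f i) xs))
        ≤ 2 * L₁ * (fbar x - fbar xs) := by
  intro x
  have hn' : (n : ℝ) ≠ 0 := Nat.cast_ne_zero.mpr hn.ne'
  have hc₁pos : (0 : ℝ) < (c₁ : ℝ) := by exact_mod_cast hc₁
  set g : Fin n → Fin d → ℝ := fun i => grad (f i) x - grad (f i) xs with hg
  set D : Fin n → ℝ := fun i => f i x - f i xs - inner2 (grad (f i) xs) (x - xs) with hD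
  have hDnn : ∀ i, 0 ≤ D i := fun i => hconv i x
  -- gradient of fC is the average of the gradients
  have hgradC : ∀ (C : Finset (Fin n)) (y : Fin d → ℝ),
      grad (fC C) y = (1 / (C.card : ℝ)) • ∑ i ∈ C, grad (f i) y := by
    intro C y
    have h1 : HasFDerivAt (fun z => ∑ i ∈ C, f i z) (∑ i ∈ C, fderiv ℝ (f i) y) y :=
      HasFDerivAt.fun_sum (fun i _ => (hdiff i y).hasFDerivAt)
    have h2 := h1.const_mul (1 / (C.card : ℝ))
    have heq : fC C = fun z => (1 / (C.card : ℝ)) * ∑ i ∈ C, f i z :=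
      funext fun z => hfC C z
    have hfd : fderiv ℝ (fC C) y = (1 / (C.card : ℝ)) • ∑ i ∈ C, fderiv ℝ (f i) y := by
      rw [heq]; exact h2.fderiv
    funext k
    simp only [grad, hfd, ContinuousLinearMap.smul_apply, ContinuousLinearMap.sum_apply,
      Pi.smul_apply, Finset.sum_apply, smul_eq_mul]
  -- smoothness in terms of the f i
  have hsum_C : ∀ C ∈ G, sq2 (∑ i ∈ C, g i)
      ≤ 2 * L C * (C.card : ℝ) * ∑ i ∈ C, D i := by
    intro C hC
    have hcpos : (0 : ℝ) < (C.card : ℝ) := by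
      exact_mod_cast (hGne C hC).card_pos
    have hc : (C.card : ℝ) ≠ 0 := hcpos.ne'
    have h1 : grad (fC C) x - grad (fC C) xs = (1 / (C.card : ℝ)) • ∑ i ∈ C, g i := by
      rw [hgradC, hgradC, ← smul_sub, ← Finset.sum_sub_distrib]
    have h2 : fC C x - fC C xs - inner2 (grad (fC C) xs) (x - xs)
        = (1 / (C.card : ℝ)) * ∑ i ∈ C, D i := by
      rw [hfC, hfC, hgradC, inner2_smul_left, inner2_sum_left]
      simp only [hD]
      rw [Finset.sum_sub_distrib, Finset.sum_sub_distrib]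
      ring
    have h3 := hsmooth C hC x
    rw [h1, h2, sq2_smul] at h3
    have h4 := mul_le_mul_of_nonneg_left h3 (le_of_lt (by positivity : (0:ℝ) < (C.card:ℝ)^2))
    calc sq2 (∑ i ∈ C, g i)
        = (C.card : ℝ)^2 * ((1 / (C.card : ℝ))^2 * sq2 (∑ i ∈ C, g i)) := by
          field_simp
      _ ≤ (C.card : ℝ)^2 * (2 * L C * ((1 / (C.card : ℝ)) * ∑ i ∈ C, D i)) := h4
      _ = 2 * L C * (C.card : ℝ) * ∑ i ∈ C, D i := by field_simp
  -- per-C bound on the summand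
  have key : ∀ C ∈ G, p C * sq2 ((1 / ((n : ℝ) * (c₁ : ℝ) * p C)) • ∑ i ∈ C, g i)
      ≤ (2 / ((n : ℝ)^2 * (c₁ : ℝ)^2)) * (((C.card : ℝ) * L C / p C) * ∑ i ∈ C, D i) := by
    intro C hC
    have hpC := hp C hC
    rw [sq2_smul]
    have h := mul_le_mul_of_nonneg_left (hsum_C C hC)
      (by positivity : (0:ℝ) ≤ p C * (1 / ((n : ℝ) * (c₁ : ℝ) * p C))^2)
    calc p C * ((1 / ((n : ℝ) * (c₁ : ℝ) * p C))^2 * sq2 (∑ i ∈ C, g i))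
        = p C * (1 / ((n : ℝ) * (c₁ : ℝ) * p C))^2 * sq2 (∑ i ∈ C, g i) := by ring
      _ ≤ p C * (1 / ((n : ℝ) * (c₁ : ℝ) * p C))^2
            * (2 * L C * (C.card : ℝ) * ∑ i ∈ C, D i) := h
      _ = (2 / ((n : ℝ)^2 * (c₁ : ℝ)^2)) * (((C.card : ℝ) * L C / p C) * ∑ i ∈ C, D i) := by
          field_simp
  -- swap sums
  have swap : ∑ C ∈ G, ((C.card : ℝ) * L C / p C) * ∑ i ∈ C, D i
      = ∑ i : Fin n, D i * ∑ C ∈ G.filter (fun C => i ∈ C), (C.card : ℝ) * L C / p C := by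
    have h1 : ∀ C ∈ G, ((C.card : ℝ) * L C / p C) * ∑ i ∈ C, D i
        = ∑ i : Fin n, (if i ∈ C then ((C.card : ℝ) * L C / p C) * D i else 0) := by
      intro C _
      rw [Finset.mul_sum, ← Finset.sum_filter]
      congr 1
      ext i; simp
    rw [Finset.sum_congr rfl h1, Finset.sum_comm]
    refine Finset.sum_congr rfl fun i _ => ?_
    rw [← Finset.sum_filter, Finset.mul_sum]
    refine Finset.sum_congr rfl fun C _ => ?_
    ring
  -- the supremum bound
  set M := ⨆ i : Fin n, ∑ C ∈ G.filter (fun C => i ∈ C), (C.card : ℝ) * L C / p C with hM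
  have : Nonempty (Fin n) := ⟨⟨0, hn⟩⟩
  have hbd : BddAbove (Set.range fun i : Fin n =>
      ∑ C ∈ G.filter (fun C => i ∈ C), (C.card : ℝ) * L C / p C) :=
    Set.Finite.bddAbove (Set.finite_range _)
  have hMle : ∀ i : Fin n,
      ∑ C ∈ G.filter (fun C => i ∈ C), (C.card : ℝ) * L C / p C ≤ M :=
    fun i => le_ciSup hbd i
  have hsumD : ∑ i : Fin n, D i * ∑ C ∈ G.filter (fun C => i ∈ C), (C.card : ℝ) * L C / p C
      ≤ M * ∑ i : Fin n, D i := by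
    rw [Finset.mul_sum]
    refine Finset.sum_le_sum fun i _ => ?_
    rw [mul_comm (M) (D i)]
    exact mul_le_mul_of_nonneg_left (hMle i) (hDnn i)
  -- sum of D in terms of fbar
  have hDsum : ∑ i : Fin n, D i = (n : ℝ) * (fbar x - fbar xs) := by
    have hinner : ∑ i : Fin n, inner2 (grad (f i) xs) (x - xs) = 0 := by
      rw [← inner2_sum_left, hcrit]
      simp [inner2]
    simp only [hD]
    rw [Finset.sum_sub_distrib, Finset.sum_sub_distrib, hinner, hfbar, hfbar]
    field_simp
    ring
  -- assemble
  calc ∑ C ∈ G, p C * sq2 ((1 / ((n : ℝ) * (c₁ : ℝ) * p C)) • ∑ i ∈ C, g i)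
      ≤ ∑ C ∈ G, (2 / ((n : ℝ)^2 * (c₁ : ℝ)^2))
          * (((C.card : ℝ) * L C / p C) * ∑ i ∈ C, D i) :=
        Finset.sum_le_sum key
    _ = (2 / ((n : ℝ)^2 * (c₁ : ℝ)^2))
          * ∑ C ∈ G, ((C.card : ℝ) * L C / p C) * ∑ i ∈ C, D i := by
        rw [Finset.mul_sum]
    _ = (2 / ((n : ℝ)^2 * (c₁ : ℝ)^2))
          * ∑ i : Fin n, D i * ∑ C ∈ G.filter (fun C => i ∈ C), (C.card : ℝ) * L C / p C := by
        rw [swap]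
    _ ≤ (2 / ((n : ℝ)^2 * (c₁ : ℝ)^2)) * (M * ∑ i : Fin n, D i) := by
        exact mul_le_mul_of_nonneg_left hsumD (by positivity)
    _ = 2 * L₁ * (fbar x - fbar xs) := by
        rw [hDsum, hL₁]
        field_simp
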